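/- Let A♯ be a self-adjoint extension of A, x_n an eigenvalue of A♯, P_n the orthogonal projection onto Ker(A♯ − x_nI), z₀ a point with Im z₀ ≠ 0, ψ₀ ∈ Ker(A* − z₀I) nonzero, and η(z) := (z − x_n)(A♯ − z₀I)(A♯ − zI)⁻¹ψ₀ (analytically extended to z = x_n). Then for every z ∈ ℂ ∖ Sp(A♯): ⟨η(z̄), η(x_n)⟩ = |x_n − z₀|² ⟨P_nψ₀, ψ₀⟩; in particular ⟨η(z̄), η(x_n)⟩ = ‖η(x_n)‖², independently of z. -/

import Mathlib

open scoped ComplexConjugate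
open Complex

noncomputable section

variable {H : Type*} [NormedAddCommGroup H] [InnerProductSpace ℂ H] [CompleteSpace H]

local notation "⟪" x ", " y "⟫" => @inner ℂ _ _ x y

/-- The range of `T - z·I`, as a subset of `H`. -/
def ranShift (T : H →ₗ.[ℂ] H) (z : ℂ) : Set H :=
  Set.range fun φ : T.domain => T φ - z • (φ : H)

/-- `ψ` belongs to the kernel of `T - z·I`. -/
def InKerShift (T : H →ₗ.[ℂ] H) (z : ℂ) (ψ : H) : Prop :=
  ∃ h : ψ ∈ T.domain, T ⟨ψ, h⟩ = z • ψ

/-- `H = ran(A - z·I) ∔ span{μ}` (direct algebraic sum): every vector has a unique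
decomposition `v = r + c • μ` with `r ∈ ran(A - z·I)`. -/
def GaugeSplit (A : H →ₗ.[ℂ] H) (μ : H) (z : ℂ) : Prop :=
  ∀ v : H, ∃! c : ℂ, v - c • μ ∈ ranShift A z

/-- The exceptional set `S_μ`. -/
def Smu (A : H →ₗ.[ℂ] H) (μ : H) : Set ℂ := {z | ¬ GaugeSplit A μ z}

/-- `A` is simple: `⋂_{Im z ≠ 0} ran(A - z·I) = {0}`. -/
def IsSimpleOp (A : H →ₗ.[ℂ] H) : Prop :=
  (⋂ z ∈ {w : ℂ | w.im ≠ 0}, ranShift A z) = ({0} : Set H)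

/-- `A` is regular: every `z ∈ ℂ` is a point of regular type, i.e. `A - z·I` has a
bounded inverse on its range. -/
def IsRegularOp (A : H →ₗ.[ℂ] H) : Prop :=
  ∀ z : ℂ, ∃ c : ℝ, 0 < c ∧ ∀ φ : A.domain, c * ‖(φ : H)‖ ≤ ‖A φ - z • (φ : H)‖

/-- `A` has deficiency indices `(1,1)`: for every `z ∈ ℂ`, the kernel of `A* - z·I`
is spanned by a single nonzero vector. -/
def DefIndicesOneOne (A : H →ₗ.[ℂ] H) : Prop :=
  ∀ z : ℂ, ∃ v : H, v ≠ 0 ∧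
    {ψ : H | InKerShift A.adjoint z ψ} = {w : H | ∃ c : ℂ, w = c • v}

/-- `A` is symmetric. -/
def IsSymmetricPOp (A : H →ₗ.[ℂ] H) : Prop :=
  ∀ x y : A.domain, ⟪(A x : H), (y : H)⟫ = ⟪(x : H), (A y : H)⟫

/-- The data of a densely defined, closed, symmetric, simple, regular operator with
deficiency indices (1,1): the setting of Krein's theory. -/
structure KreinOp (H : Type*) [NormedAddCommGroup H] [InnerProductSpace ℂ H]
    [CompleteSpace H] where
  A : H →ₗ.[ℂ] H
  dense : Dense (A.domain : Set H)
  closed : A.IsClosed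
  symm : IsSymmetricPOp A
  simple : IsSimpleOp A
  regular : IsRegularOp A
  defOneOne : DefIndicesOneOne A

/-- `B` is a self-adjoint extension of `A` (within `H`). -/
def IsSAExt (A B : H →ₗ.[ℂ] H) : Prop :=
  A ≤ B ∧ IsSelfAdjoint B

/-- `R z` is, for every `z ∈ res`, the (everywhere defined, bounded) inverse of `B - z·I`;
in particular `res ⊆ ℂ ∖ Sp(B)`. -/
def IsResolventOn (B : H →ₗ.[ℂ] H) (res : Set ℂ) (R : ℂ → H →L[ℂ] H) : Prop :=
  ∀ z ∈ res, (∀ v : H, ∃ h : R z v ∈ B.domain, B ⟨R z v, h⟩ - z • R z v = v)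
    ∧ ∀ φ : B.domain, R z ((B φ : H) - z • (φ : H)) = (φ : H)

/-- `ψ(z) = ψ₀ + (z - z₀)(B - z·I)⁻¹ ψ₀`. -/
def psiFun (R : ℂ → H →L[ℂ] H) (z₀ : ℂ) (ψ₀ : H) (z : ℂ) : H :=
  ψ₀ + (z - z₀) • R z ψ₀

/-- `ξ(z) = ψ(z̄) / ⟪μ, ψ(z̄)⟫`. -/
def xiFun (μ : H) (R : ℂ → H →L[ℂ] H) (z₀ : ℂ) (ψ₀ : H) (z : ℂ) : H :=
  (⟪μ, psiFun R z₀ ψ₀ (conj z)⟫)⁻¹ • psiFun R z₀ ψ₀ (conj z)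

/-- `P` is the orthogonal projection onto `Ker(B - x·I)`. -/
def IsEigenProjection (B : H →ₗ.[ℂ] H) (x : ℝ) (P : H →L[ℂ] H) : Prop :=
  IsSelfAdjoint P ∧ (∀ v : H, P (P v) = P v) ∧ ∀ v : H, (P v = v ↔ InKerShift B (x : ℂ) v)



private lemma sa_symm {H : Type*} [NormedAddCommGroup H] [InnerProductSpace ℂ H]
    [CompleteSpace H] {B : H →ₗ.[ℂ] H} (hB : IsSelfAdjoint B) {x y : H}
    (hx : x ∈ B.domain) (hy : y ∈ B.domain) :
    @inner ℂ _ _ (B ⟨x, hx⟩ : H) y = @inner ℂ _ _ x (B ⟨y, hy⟩ : H) := by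
  have heq : B.adjoint = B := hB
  obtain ⟨hdom, hfun⟩ := LinearPMap.ext_iff.mp heq
  have hx' : x ∈ B.adjoint.domain := hdom.symm ▸ hx
  have hval : B.adjoint ⟨x, hx'⟩ = B ⟨x, hx⟩ := hfun (x := x) (hf := hx') (hg := hx)
  have := LinearPMap.adjoint_isFormalAdjoint hB.dense_domain ⟨x, hx'⟩ ⟨y, hy⟩
  rw [hval] at this
  exact this

/-- With `η(z) = (z - x_n)(A♯ - z₀·I)(A♯ - z·I)⁻¹ψ₀` and its analytic
extension value `η(x_n) = -(x_n - z₀) P_n ψ₀`, one has, for every `z ∉ Sp(A♯)`,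
`⟪η(z̄), η(x_n)⟫ = |x_n - z₀|² ⟪P_n ψ₀, ψ₀⟫ = ‖η(x_n)‖²`, independently of `z`. -/
theorem statement8 [TopologicalSpace.SeparableSpace H]
    (S : KreinOp H)
    (B : H →ₗ.[ℂ] H) (hB : IsSAExt S.A B)
    (res : Set ℂ) (R : ℂ → H →L[ℂ] H) (hR : IsResolventOn B res R)
    (xn : ℝ) (hxev : ∃ v : H, v ≠ 0 ∧ InKerShift B (xn : ℂ) v)
    (P : H →L[ℂ] H) (hP : IsEigenProjection B xn P)
    (z₀ : ℂ) (hz₀ : z₀.im ≠ 0) (hz₀res : z₀ ∈ res)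
    (ψ₀ : H) (hψ₀ne : ψ₀ ≠ 0) (hψ₀ : InKerShift S.A.adjoint z₀ ψ₀)
    (z : ℂ) (hz : conj z ∈ res) (h : R (conj z) ψ₀ ∈ B.domain) :
    ⟪(conj z - (xn : ℂ)) • ((B ⟨R (conj z) ψ₀, h⟩ : H) - z₀ • R (conj z) ψ₀),
        -((xn : ℂ) - z₀) • P ψ₀⟫
      = ((‖(xn : ℂ) - z₀‖ : ℂ) ^ 2) * ⟪P ψ₀, ψ₀⟫
    ∧ ⟪(conj z - (xn : ℂ)) • ((B ⟨R (conj z) ψ₀, h⟩ : H) - z₀ • R (conj z) ψ₀),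
        -((xn : ℂ) - z₀) • P ψ₀⟫
      = ((‖-((xn : ℂ) - z₀) • P ψ₀‖ : ℂ) ^ 2) := by
  obtain ⟨hle, hsa⟩ := hB
  have hPP : P (P ψ₀) = P ψ₀ := hP.2.1 ψ₀
  obtain ⟨hw, hBw⟩ := (hP.2.2 (P ψ₀)).mp hPP
  obtain ⟨h', hres⟩ := (hR (conj z) hz).1 ψ₀
  have hres' : (B ⟨R (conj z) ψ₀, h⟩ : H) - conj z • R (conj z) ψ₀ = ψ₀ := hres
  have hPs := hP.1.isSymmetric
  have hsymm : ⟪(B ⟨R (conj z) ψ₀, h⟩ : H), P ψ₀⟫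
      = ⟪(R (conj z) ψ₀ : H), (B ⟨P ψ₀, hw⟩ : H)⟫ := sa_symm hsa h hw
  set a := ⟪(R (conj z) ψ₀ : H), P ψ₀⟫ with ha
  have ha1 : ⟪(B ⟨R (conj z) ψ₀, h⟩ : H), P ψ₀⟫ = (xn : ℂ) * a := by
    rw [hsymm, hBw, inner_smul_right]
  have hb : ⟪ψ₀, P ψ₀⟫ = ((xn : ℂ) - z) * a := by
    have hx : ⟪(B ⟨R (conj z) ψ₀, h⟩ : H) - conj z • R (conj z) ψ₀, P ψ₀⟫
        = ((xn : ℂ) - z) * a := by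
      rw [inner_sub_left, inner_smul_left, ha1]
      simp only [Complex.conj_conj]
      ring
    rw [hres'] at hx
    exact hx
  have hconj : conj ((xn : ℂ) - z₀) = (xn : ℂ) - conj z₀ := by
    simp [map_sub, Complex.conj_ofReal]
  have key : ((‖(xn : ℂ) - z₀‖ : ℂ)) ^ 2 = ((xn : ℂ) - z₀) * ((xn : ℂ) - conj z₀) := by
    rw [← hconj, ← Complex.ofReal_pow, Complex.sq_norm,
      Complex.mul_conj]
  have hPww : ⟪P ψ₀, ψ₀⟫ = ⟪ψ₀, P ψ₀⟫ := by
    have := hPs ψ₀ ψ₀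
    simpa using this
  have hww : ⟪P ψ₀, P ψ₀⟫ = ⟪ψ₀, P ψ₀⟫ := by
    have := hPs ψ₀ (P ψ₀)
    simpa [hPP] using this
  have hL : ⟪(conj z - (xn : ℂ)) • ((B ⟨R (conj z) ψ₀, h⟩ : H) - z₀ • R (conj z) ψ₀),
      -((xn : ℂ) - z₀) • P ψ₀⟫
      = (z - (xn : ℂ)) * (-((xn : ℂ) - z₀)) * (((xn : ℂ) - conj z₀) * a) := by
    rw [inner_smul_left, inner_smul_right, inner_sub_left, ha1, inner_smul_left]
    simp only [map_sub, Complex.conj_conj, Complex.conj_ofReal]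
    ring
  have hR1 : ((‖(xn : ℂ) - z₀‖ : ℂ) ^ 2) * ⟪P ψ₀, ψ₀⟫
      = (z - (xn : ℂ)) * (-((xn : ℂ) - z₀)) * (((xn : ℂ) - conj z₀) * a) := by
    rw [key, hPww, hb]
    ring
  refine ⟨hL.trans hR1.symm, ?_⟩
  have hR2 : ((‖-((xn : ℂ) - z₀) • P ψ₀‖ : ℂ) ^ 2)
      = ((‖(xn : ℂ) - z₀‖ : ℂ) ^ 2) * ⟪P ψ₀, ψ₀⟫ := by
    rw [norm_smul, norm_neg, hPww, ← hww, inner_self_eq_norm_sq_to_K]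
    push_cast
    rw [mul_pow]
    exact rfl
  rw [hR2]
  exact hL.trans hR1.symm

end
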